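/- arXiv:1401.1161 — 4 statements merged into one kernel-verified Lean document; each statement's English description precedes it below -/
import Mathlib

section
/- Let G be a finite abelian group and let λ be a linking form on G. If S and T are subgroups of G such that λ(s,t) = 0 for all s ∈ S and all t ∈ T, then |S| · |T| ≤ |G|. -/
/-- A linking form on a (finite) abelian group `G`: a `ℚ/ℤ`-valued pairing that is
additive in each variable, symmetric, and nondegenerate. -/
def IsLinkingForm {G : Type*} [AddCommGroup G] (l : G → G → AddCircle (1 : ℚ)) : Prop :=
  (∀ x y z : G, l (x + y) z = l x z + l y z) ∧
  (∀ x y z : G, l x (y + z) = l x y + l x z) ∧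
  (∀ x y : G, l x y = l y x) ∧
  (∀ x : G, x ≠ 0 → ∃ y : G, l x y ≠ 0)

noncomputable def ratToRealCircle : AddCircle (1 : ℚ) →+ AddCircle (1 : ℝ) :=
  QuotientAddGroup.map _ _ (Rat.castHom ℝ).toAddMonoidHom (by
    rintro q ⟨n, rfl⟩
    exact ⟨n, by push_cast; simp⟩)

lemma ratToRealCircle_injective : Function.Injective ratToRealCircle := by
  rw [injective_iff_map_eq_zero]
  intro a ha
  induction a using QuotientAddGroup.induction_on with
  | H q =>
    have : ((q : ℝ) : AddCircle (1 : ℝ)) = 0 := ha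
    rw [AddCircle.coe_eq_zero_iff] at this ⊢
    obtain ⟨n, hn⟩ := this
    refine ⟨n, ?_⟩
    have h2 : ((n : ℝ)) = (q : ℝ) := by simpa using hn
    have h3 : ((n : ℚ) : ℝ) = (q : ℝ) := by push_cast; exact h2
    have h4 : (n : ℚ) = q := Rat.cast_injective (α := ℝ) h3
    simpa using h4

noncomputable def dualEmbed (A : Type*) [AddCommGroup A] (c : A →+ AddCircle (1 : ℚ)) :
    AddChar A ℂ where
  toFun a := (AddCircle.toCircle (ratToRealCircle (c a)) : ℂ)
  map_zero_eq_one' := by simp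
  map_add_eq_mul' a b := by
    push_cast [map_add, AddCircle.toCircle_add]
    norm_cast

lemma dualEmbed_injective (A : Type*) [AddCommGroup A] :
    Function.Injective (dualEmbed A) := by
  intro c c' hcc
  ext a
  have h1 : (dualEmbed A c) a = (dualEmbed A c') a := by rw [hcc]
  have h2 : AddCircle.toCircle (ratToRealCircle (c a)) =
      AddCircle.toCircle (ratToRealCircle (c' a)) := by
    have := h1
    simp only [dualEmbed, AddChar.coe_mk] at this
    exact Circle.ext this
  exact ratToRealCircle_injective
    (AddCircle.injective_toCircle one_ne_zero h2)

lemma card_dual_le (A : Type*) [AddCommGroup A] [Finite A] :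
    Nat.card (A →+ AddCircle (1 : ℚ)) ≤ Nat.card A := by
  cases nonempty_fintype A
  calc Nat.card (A →+ AddCircle (1 : ℚ)) ≤ Nat.card (AddChar A ℂ) :=
        Nat.card_le_card_of_injective _ (dualEmbed_injective A)
    _ ≤ Nat.card A := by
        rw [Nat.card_eq_fintype_card, Nat.card_eq_fintype_card, AddChar.card_eq]

/-- If `λ(s,t) = 0` for all `s ∈ S`, `t ∈ T`, then `|S| ⬝ |T| ≤ |G|`. -/
theorem stmt0 {G : Type*} [AddCommGroup G] [Finite G]
    (l : G → G → AddCircle (1 : ℚ)) (hl : IsLinkingForm l)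
    (S T : AddSubgroup G)
    (h : ∀ s ∈ S, ∀ t ∈ T, l s t = 0) :
    Nat.card S * Nat.card T ≤ Nat.card G := by
  obtain ⟨hadd₁, hadd₂, hsymm, hnd⟩ := hl
  have hzero : ∀ x : G, l x 0 = 0 := by
    intro x
    have := hadd₂ x 0 0
    rw [add_zero] at this
    exact (left_eq_add.mp this)
  have hzero' : ∀ x : G, l 0 x = 0 := fun x => (hsymm 0 x).trans (hzero x)
  have hneg : ∀ x y : G, l x (-y) = - l x y := by
    intro x y
    have := hadd₂ x y (-y)
    rw [add_neg_cancel, hzero] at this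
    exact (neg_eq_of_add_eq_zero_right this.symm).symm
  -- the right-kernel of the restriction of `l` to `S`
  set K : AddSubgroup G :=
    { carrier := {x | ∀ s ∈ S, l s x = 0}
      zero_mem' := fun s _ => hzero s
      add_mem' := by
        intro a b ha hb s hs
        rw [hadd₂, ha s hs, hb s hs, add_zero]
      neg_mem' := by
        intro a ha s hs
        rw [hneg, ha s hs, neg_zero] } with hK
  have hTK : T ≤ K := fun t ht s hs => h s hs t ht
  have hcardT : Nat.card T ≤ Nat.card K := AddSubgroup.card_le_of_le hTK
  -- S embeds into the dual of G ⧸ K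
  have hSQ : Nat.card S ≤ Nat.card (G ⧸ K) := by
    have key : ∀ s : S, ∀ k ∈ K, l k (s : G) = 0 := by
      intro s k hk
      rw [hsymm]
      exact hk s s.2
    let f : S → ((G ⧸ K) →+ AddCircle (1 : ℚ)) := fun s =>
      QuotientAddGroup.lift K (AddMonoidHom.mk' (fun x => l x (s : G)) (fun a b => hadd₁ a b s))
        (fun k hk => key s k hk)
    have hf : Function.Injective f := by
      intro s s' hss
      have hx : ∀ x : G, l x (s : G) = l x (s' : G) := by
        intro x
        exact congrArg (fun g => g ((x : G) : G ⧸ K)) hss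
      by_contra hne
      have hne' : ((s : G) - (s' : G)) ≠ 0 := by
        intro h0
        exact hne (Subtype.ext (sub_eq_zero.mp h0))
      obtain ⟨y, hy⟩ := hnd _ hne'
      apply hy
      have : l y ((s : G) - (s' : G)) = 0 := by
        rw [sub_eq_add_neg, hadd₂, hneg, hx y, add_neg_cancel]
      rw [hsymm]
      exact this
    haveI : Finite ((G ⧸ K) →+ AddCircle (1 : ℚ)) :=
      Finite.of_injective _ (dualEmbed_injective (G ⧸ K))
    calc Nat.card S ≤ Nat.card ((G ⧸ K) →+ AddCircle (1 : ℚ)) :=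
          Nat.card_le_card_of_injective f hf
      _ ≤ Nat.card (G ⧸ K) := card_dual_le _
  calc Nat.card S * Nat.card T ≤ Nat.card (G ⧸ K) * Nat.card K :=
        Nat.mul_le_mul hSQ hcardT
    _ = Nat.card G := (AddSubgroup.card_eq_card_quotient_mul_card_addSubgroup K).symm
end

section
/- Let (A, μ, f) and (B, ν, g) be linking triples. If (A, μ, f) and the orthogonal sum (A × B, μ ⊕ ν, f ⊕ g) are both hyperbolic, then (B, ν, g) is metabolic. -/
/-- A linking triple `(G, l, f)` is metabolic if there is a subgroup `G₁` with
`|G₁|² = |G|` on which both `l` and `f` vanish. -/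
def IsMetabolic {G : Type*} [AddCommGroup G]
    (l : G → G → AddCircle (1 : ℚ)) (f : G → ℚ) : Prop :=
  ∃ G₁ : AddSubgroup G, Nat.card G₁ ^ 2 = Nat.card G ∧
    (∀ x ∈ G₁, ∀ y ∈ G₁, l x y = 0) ∧ (∀ x ∈ G₁, f x = 0)

/-- A linking triple `(G, l, f)` is hyperbolic if `G = G₁ ⊕ G₂` with `G₁ ≅ G₂`,
`l` vanishing on each of `G₁`, `G₂`, and `f` vanishing on `G₁ ∪ G₂`. -/
def IsHyperbolic {G : Type*} [AddCommGroup G]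
    (l : G → G → AddCircle (1 : ℚ)) (f : G → ℚ) : Prop :=
  ∃ G₁ G₂ : AddSubgroup G,
    G₁ ⊓ G₂ = ⊥ ∧ G₁ ⊔ G₂ = ⊤ ∧ Nonempty (G₁ ≃+ G₂) ∧
    (∀ x ∈ G₁, ∀ y ∈ G₁, l x y = 0) ∧
    (∀ x ∈ G₂, ∀ y ∈ G₂, l x y = 0) ∧
    (∀ x ∈ G₁, f x = 0) ∧ (∀ x ∈ G₂, f x = 0)



open Function

section Char

-- characters of `ZMod n`
lemma zmodCharEquiv (n : ℕ) (hn : 0 < n) :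
    Nonempty ((ZMod n →+ AddCircle (1 : ℚ)) ≃ ZMod n) := by
  have : NeZero n := ⟨hn.ne'⟩
  set x₀ : AddCircle (1 : ℚ) := (((n : ℚ)⁻¹ : ℚ) : AddCircle (1 : ℚ)) with hx₀def
  have hord : addOrderOf x₀ = n := by
    simpa [one_div] using AddCircle.addOrderOf_period_div (p := (1 : ℚ)) hn
  have hzsmul : ∀ z : ℤ, z • x₀ = 0 ↔ (z : ZMod n) = 0 := by
    intro z
    rw [← addOrderOf_dvd_iff_zsmul_eq_zero, hord, ZMod.intCast_zmod_eq_zero_iff_dvd]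
  have hn0 : ((zmultiplesHom (AddCircle (1:ℚ))) x₀) (n : ℤ) = 0 := by
    simp only [zmultiplesHom_apply]
    rw [hzsmul]; simp
  let χ : ZMod n →+ AddCircle (1 : ℚ) := ZMod.lift n ⟨zmultiplesHom _ x₀, hn0⟩
  have hχ : ∀ z : ℤ, χ ((z : ZMod n)) = z • x₀ := fun z => ZMod.lift_coe n _ z
  let F : ZMod n → (ZMod n →+ AddCircle (1 : ℚ)) :=
    fun k => χ.comp (AddMonoidHom.mulLeft k)
  have hFapp : ∀ (z m : ℤ), F (z : ZMod n) ((m : ZMod n)) = (z * m) • x₀ := by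
    intro z m
    have : ((z : ZMod n)) * ((m : ZMod n)) = ((z * m : ℤ) : ZMod n) := by push_cast; ring
    simp only [F, AddMonoidHom.comp_apply, AddMonoidHom.coe_mulLeft, this, hχ]
  have hinj : Injective F := by
    intro a b hab
    obtain ⟨z, rfl⟩ := ZMod.intCast_surjective a
    obtain ⟨w, rfl⟩ := ZMod.intCast_surjective b
    have := congrArg (fun c => c ((1 : ℤ) : ZMod n)) hab
    simp only [hFapp, mul_one] at this
    have hzw : (z - w) • x₀ = 0 := by rw [sub_smul, this, sub_self]
    rw [hzsmul] at hzw
    push_cast at hzw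
    rw [sub_eq_zero] at hzw
    exact_mod_cast hzw
  have hsurj : Surjective F := by
    intro c
    -- `c 1` is `n`-torsion
    have hc1 : (n : ℤ) • c 1 = 0 := by
      rw [← map_zsmul]
      have : (n : ℤ) • (1 : ZMod n) = ((n : ℤ) : ZMod n) := by
        rw [zsmul_one]
      rw [this]
      simp
    -- torsion elements are multiples of x₀
    obtain ⟨q, hq⟩ := QuotientAddGroup.mk_surjective (c 1)
    have hq' : ((((n : ℤ) • q : ℚ) : AddCircle (1:ℚ))) = 0 := by
      rw [← hq] at hc1
      rw [← hc1]
      rfl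
    rw [AddCircle.coe_eq_zero_iff] at hq'
    obtain ⟨z, hz⟩ := hq'
    have hnq : (n : ℚ) * q = z := by
      simpa [zsmul_eq_mul] using hz.symm
    have hqz : q = z • ((n : ℚ)⁻¹) := by
      have hn' : (n : ℚ) ≠ 0 := by positivity
      rw [zsmul_eq_mul]
      field_simp
      linarith [hnq]
    have hcx : c 1 = z • x₀ := by
      rw [← hq, hqz, hx₀def, ← AddCircle.coe_zsmul]
    refine ⟨(z : ZMod n), ?_⟩
    -- two homs agreeing at 1 agree
    ext a
    obtain ⟨m, rfl⟩ := ZMod.intCast_surjective a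
    have h1 : ((m : ZMod n)) = m • (1 : ZMod n) := by rw [zsmul_one]
    rw [hFapp, h1, map_zsmul, hcx, mul_comm, mul_smul]
  exact ⟨(Equiv.ofBijective F ⟨hinj, hsurj⟩).symm⟩

lemma charEquiv (G : Type*) [AddCommGroup G] [Finite G] :
    Nonempty ((G →+ AddCircle (1 : ℚ)) ≃ G) := by
  classical
  obtain ⟨ι, _, n, hn, ⟨e⟩⟩ := AddCommGroup.equiv_directSum_zmod_of_finite' G
  let e2 : G ≃+ ∀ i, ZMod (n i) := e.trans (DirectSum.addEquivProd _)
  let E1 : (G →+ AddCircle (1 : ℚ)) ≃+ ((∀ i, ZMod (n i)) →+ AddCircle (1 : ℚ)) :=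
    AddEquiv.addMonoidHomCongrLeft e2
  let E2 := Pi.addMonoidHomAddEquiv (fun i => ZMod (n i)) (AddCircle (1 : ℚ))
  have φ : ∀ i, (ZMod (n i) →+ AddCircle (1 : ℚ)) ≃ ZMod (n i) :=
    fun i => (zmodCharEquiv (n i) (lt_trans one_pos (hn i))).some
  exact ⟨E1.toEquiv.trans <| E2.toEquiv.trans <| (Equiv.piCongrRight φ).trans e2.symm.toEquiv⟩

lemma charFinite (G : Type*) [AddCommGroup G] [Finite G] :
    Finite (G →+ AddCircle (1 : ℚ)) :=
  Finite.of_equiv _ (charEquiv G).some.symm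

lemma charCard (G : Type*) [AddCommGroup G] [Finite G] :
    Nat.card (G →+ AddCircle (1 : ℚ)) = Nat.card G :=
  Nat.card_congr (charEquiv G).some

-- surjectivity of restriction of characters to a subgroup
lemma charRestrict_surjective {G : Type*} [AddCommGroup G] (H : AddSubgroup G)
    (c : (H : Type _) →+ AddCircle (1 : ℚ)) :
    ∃ d : G →+ AddCircle (1 : ℚ), ∀ y : H, d (y : G) = c y := by
  obtain ⟨d, hd⟩ := CharacterModule.dual_surjective_of_injective
    (R := ℤ) H.subtype.toIntLinearMap H.subtype_injective c
  exact ⟨d, fun y => DFunLike.congr_fun hd y⟩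

end Char

section Perp

variable {G : Type*} [AddCommGroup G]

variable (l : G → G → AddCircle (1 : ℚ))

lemma lf_zero_left (hl : IsLinkingForm l) (y : G) : l 0 y = 0 := by
  have h := hl.1 0 0 y
  rw [add_zero] at h
  exact left_eq_add.mp h

lemma lf_zero_right (hl : IsLinkingForm l) (x : G) : l x 0 = 0 := by
  have h := hl.2.1 x 0 0
  rw [add_zero] at h
  exact left_eq_add.mp h

lemma lf_neg_left (hl : IsLinkingForm l) (x y : G) : l (-x) y = - l x y := by
  have h := hl.1 x (-x) y
  rw [add_neg_cancel, lf_zero_left l hl] at h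
  exact (neg_eq_of_add_eq_zero_right h.symm).symm

def perp (hl : IsLinkingForm l) (H : AddSubgroup G) : AddSubgroup G where
  carrier := {x | ∀ y ∈ H, l x y = 0}
  zero_mem' := fun y _ => lf_zero_left l hl y
  add_mem' := by
    intro a b ha hb y hy
    rw [hl.1, ha y hy, hb y hy, add_zero]
  neg_mem' := by
    intro a ha y hy
    rw [lf_neg_left l hl, ha y hy, neg_zero]

lemma mem_perp (hl : IsLinkingForm l) (H : AddSubgroup G) (x : G) :
    x ∈ perp l hl H ↔ ∀ y ∈ H, l x y = 0 := Iff.rfl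

end Perp

section PerpCard

variable {G : Type*} [AddCommGroup G] [Finite G]
variable (l : G → G → AddCircle (1 : ℚ))

lemma perp_card (hl : IsLinkingForm l) (H : AddSubgroup G) :
    Nat.card (perp l hl H) * Nat.card H = Nat.card G := by
  haveI : Finite (G →+ AddCircle (1 : ℚ)) := charFinite G
  haveI : Finite ((H : Type _) →+ AddCircle (1 : ℚ)) := charFinite H
  -- the adjoint map into characters of H
  let Φ : G →+ ((H : Type _) →+ AddCircle (1 : ℚ)) :=
    { toFun := fun x =>
        { toFun := fun y => l x (y : G)
          map_zero' := lf_zero_right l hl x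
          map_add' := fun y z => hl.2.1 x y z }
      map_zero' := by ext y; exact lf_zero_left l hl y
      map_add' := fun a b => by ext y; exact hl.1 a b y }
  -- the adjoint map into characters of G
  let Ψ : G →+ (G →+ AddCircle (1 : ℚ)) :=
    { toFun := fun x =>
        { toFun := fun y => l x y
          map_zero' := lf_zero_right l hl x
          map_add' := fun y z => hl.2.1 x y z }
      map_zero' := by ext y; exact lf_zero_left l hl y
      map_add' := fun a b => by ext y; exact hl.1 a b y }
  have hΨinj : Function.Injective Ψ := by
    intro a b hab
    by_contra hne
    have h : a - b ≠ 0 := sub_ne_zero.mpr hne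
    obtain ⟨y, hy⟩ := hl.2.2.2 _ h
    apply hy
    have : Ψ (a - b) = 0 := by rw [map_sub, hab, sub_self]
    exact DFunLike.congr_fun this y
  have hΨbij : Function.Bijective Ψ :=
    (Nat.bijective_iff_injective_and_card Ψ).mpr ⟨hΨinj, (charCard G).symm⟩
  have hΦsurj : Function.Surjective Φ := by
    intro c
    obtain ⟨d, hd⟩ := charRestrict_surjective H c
    obtain ⟨x, hx⟩ := hΨbij.2 d
    refine ⟨x, ?_⟩
    ext y
    have : Ψ x (y : G) = d (y : G) := DFunLike.congr_fun hx (y : G)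
    calc Φ x y = Ψ x (y : G) := rfl
    _ = d (y : G) := this
    _ = c y := hd y
  have hker : Φ.ker = perp l hl H := by
    ext x
    constructor
    · intro hx y hy
      exact DFunLike.congr_fun hx (⟨y, hy⟩ : H)
    · intro hx
      ext y
      exact hx (y : G) y.2
  have h1 : Nat.card G = Nat.card (G ⧸ Φ.ker) * Nat.card Φ.ker :=
    AddSubgroup.card_eq_card_quotient_mul_card_addSubgroup Φ.ker
  have h2 : Nat.card (G ⧸ Φ.ker) = Nat.card ((H : Type _) →+ AddCircle (1 : ℚ)) :=
    Nat.card_congr (QuotientAddGroup.quotientKerEquivOfSurjective Φ hΦsurj).toEquiv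
  rw [h1, h2, charCard H, hker, mul_comm]

end PerpCard

section SupInf

variable {G : Type*} [AddCommGroup G] [Finite G]

omit [Finite G] in
lemma card_sup_mul_card_inf (H K : AddSubgroup G) :
    Nat.card (H ⊔ K : AddSubgroup G) * Nat.card (H ⊓ K : AddSubgroup G) =
      Nat.card H * Nat.card K := by
  have e := QuotientAddGroup.quotientInfEquivSumNormalQuotient H K
  have c1 : Nat.card (H ⊔ K : AddSubgroup G) =
      Nat.card ((H ⊔ K : AddSubgroup G) ⧸ K.addSubgroupOf (H ⊔ K)) *
        Nat.card (K.addSubgroupOf (H ⊔ K)) :=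
    AddSubgroup.card_eq_card_quotient_mul_card_addSubgroup _
  have c2 : Nat.card H =
      Nat.card ((H : Type _) ⧸ K.addSubgroupOf H) * Nat.card (K.addSubgroupOf H) :=
    AddSubgroup.card_eq_card_quotient_mul_card_addSubgroup _
  have c3 : Nat.card (K.addSubgroupOf (H ⊔ K)) = Nat.card K :=
    Nat.card_congr (AddSubgroup.addSubgroupOfEquivOfLe le_sup_right).toEquiv
  have c4 : Nat.card (K.addSubgroupOf H) = Nat.card (H ⊓ K : AddSubgroup G) := by
    rw [← AddSubgroup.inf_addSubgroupOf_left]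
    exact Nat.card_congr (AddSubgroup.addSubgroupOfEquivOfLe inf_le_left).toEquiv
  have c5 : Nat.card ((H : Type _) ⧸ K.addSubgroupOf H) =
      Nat.card ((H ⊔ K : AddSubgroup G) ⧸ K.addSubgroupOf (H ⊔ K)) :=
    Nat.card_congr e.toEquiv
  rw [c1, c3, ← c5, mul_right_comm, ← c4, ← c2]

lemma addSubgroup_eq_of_le_of_card_le {H K : AddSubgroup G} (h : H ≤ K)
    (hc : Nat.card K ≤ Nat.card H) : H = K := by
  have hbij : Function.Bijective (AddSubgroup.inclusion h) :=
    (Nat.bijective_iff_injective_and_card (AddSubgroup.inclusion h)).mpr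
      ⟨AddSubgroup.inclusion_injective h,
        le_antisymm (AddSubgroup.card_le_of_le h) hc⟩
  refine le_antisymm h fun x hx => ?_
  obtain ⟨⟨y, hy⟩, hxy⟩ := hbij.2 ⟨x, hx⟩
  have hyx : y = x := congrArg Subtype.val hxy
  exact hyx ▸ hy

end SupInf

section PerpMore

variable {G : Type*} [AddCommGroup G] [Finite G]
variable (l : G → G → AddCircle (1 : ℚ))

omit [Finite G] in
lemma perp_antitone (hl : IsLinkingForm l) {H K : AddSubgroup G} (h : H ≤ K) :
    perp l hl K ≤ perp l hl H :=
  fun _x hx y hy => hx y (h hy)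

omit [Finite G] in
lemma perp_sup (hl : IsLinkingForm l) (H K : AddSubgroup G) :
    perp l hl (H ⊔ K) = perp l hl H ⊓ perp l hl K := by
  refine le_antisymm
    (le_inf (perp_antitone l hl le_sup_left) (perp_antitone l hl le_sup_right)) ?_
  intro x hx y hy
  obtain ⟨a, ha, b, hb, rfl⟩ := AddSubgroup.mem_sup.mp hy
  rw [hl.2.1, hx.1 a ha, hx.2 b hb, add_zero]

lemma perp_eq_self (hl : IsLinkingForm l) (H : AddSubgroup G) (hv : H ≤ perp l hl H)
    (hc : Nat.card H ^ 2 = Nat.card G) : perp l hl H = H := by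
  have h1 := perp_card l hl H
  have hpos : 0 < Nat.card H := Nat.card_pos
  have hcc : Nat.card (perp l hl H) = Nat.card H := by
    refine Nat.eq_of_mul_eq_mul_right hpos ?_
    rw [h1, ← hc, sq]
  exact (addSubgroup_eq_of_le_of_card_le hv hcc.le).symm

omit [Finite G] in
lemma hyp_card {H₁ H₂ : AddSubgroup G} (hinf : H₁ ⊓ H₂ = ⊥) (hsup : H₁ ⊔ H₂ = ⊤)
    (he : Nonempty (H₁ ≃+ H₂)) : Nat.card H₁ ^ 2 = Nat.card G := by
  have h := card_sup_mul_card_inf H₁ H₂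
  rw [hinf, hsup, AddSubgroup.card_top, AddSubgroup.card_bot, mul_one] at h
  rw [sq, h, Nat.card_congr he.some.toEquiv]

end PerpMore



/-- If `(A, μ, f)` and `(A × B, μ ⊕ ν, f ⊕ g)` are both hyperbolic, then
`(B, ν, g)` is metabolic. -/
theorem stmt1 {A B : Type*} [AddCommGroup A] [Finite A] [AddCommGroup B] [Finite B]
    (μ : A → A → AddCircle (1 : ℚ)) (f : A → ℚ)
    (ν : B → B → AddCircle (1 : ℚ)) (g : B → ℚ)
    (hμ : IsLinkingForm μ) (hν : IsLinkingForm ν)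
    (hA : IsHyperbolic μ f)
    (hAB : IsHyperbolic (fun x y : A × B => μ x.1 y.1 + ν x.2 y.2)
      (fun x : A × B => f x.1 + g x.2)) :
    IsMetabolic ν g := by
  classical
  set lam : A × B → A × B → AddCircle (1 : ℚ) := fun x y => μ x.1 y.1 + ν x.2 y.2 with hlamdef
  obtain ⟨A₁, A₂, hAinf, hAsup, heA, hμ1, hμ2, hf1, hf2⟩ := hA
  obtain ⟨G₁, G₂, hGinf, hGsup, heG, hL1, hL2, hF1, hF2⟩ := hAB
  have hlam : IsLinkingForm lam := by
    refine ⟨?_, ?_, ?_, ?_⟩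
    · intro x y z
      show μ (x.1 + y.1) z.1 + ν (x.2 + y.2) z.2 = _
      rw [hμ.1, hν.1]
      show _ = μ x.1 z.1 + ν x.2 z.2 + (μ y.1 z.1 + ν y.2 z.2)
      abel
    · intro x y z
      show μ x.1 (y.1 + z.1) + ν x.2 (y.2 + z.2) = _
      rw [hμ.2.1, hν.2.1]
      show _ = μ x.1 y.1 + ν x.2 y.2 + (μ x.1 z.1 + ν x.2 z.2)
      abel
    · intro x y
      show μ x.1 y.1 + ν x.2 y.2 = μ y.1 x.1 + ν y.2 x.2
      rw [hμ.2.2.1, hν.2.2.1]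
    · rintro ⟨a, b⟩ hab
      by_cases ha : a = 0
      · subst ha
        have hb : b ≠ 0 := fun hb => hab (by simp [hb, Prod.ext_iff])
        obtain ⟨y, hy⟩ := hν.2.2.2 b hb
        refine ⟨(0, y), ?_⟩
        show μ 0 0 + ν b y ≠ 0
        rwa [lf_zero_left μ hμ, zero_add]
      · obtain ⟨y, hy⟩ := hμ.2.2.2 a ha
        refine ⟨(y, 0), ?_⟩
        show μ a y + ν b 0 ≠ 0
        rwa [lf_zero_right ν hν, add_zero]
  have hcardA : Nat.card A₁ ^ 2 = Nat.card A := hyp_card hAinf hAsup heA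
  have hcardG : Nat.card G₁ ^ 2 = Nat.card (A × B) := hyp_card hGinf hGsup heG
  have hperpA : perp μ hμ A₁ = A₁ :=
    perp_eq_self μ hμ A₁ (fun x hx y hy => hμ1 x hx y hy) hcardA
  have hperpG : perp lam hlam G₁ = G₁ :=
    perp_eq_self lam hlam G₁ (fun x hx y hy => hL1 x hx y hy) hcardG
  set P : AddSubgroup (A × B) := A₁.prod ⊤ with hPdef
  set V : AddSubgroup (A × B) := A₁.prod ⊥ with hVdef
  have hperpP : perp lam hlam P = V := by
    apply le_antisymm
    · intro x hx
      rw [hVdef, AddSubgroup.mem_prod]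
      constructor
      · rw [← hperpA]
        intro a ha
        have h := hx (a, 0) (AddSubgroup.mem_prod.mpr ⟨ha, trivial⟩)
        rw [show lam x (a, 0) = μ x.1 a + ν x.2 0 from rfl,
          lf_zero_right ν hν, add_zero] at h
        exact h
      · rw [AddSubgroup.mem_bot]
        by_contra h2
        obtain ⟨y, hy⟩ := hν.2.2.2 x.2 h2
        have h := hx (0, y) (AddSubgroup.mem_prod.mpr ⟨A₁.zero_mem, trivial⟩)
        rw [show lam x (0, y) = μ x.1 0 + ν x.2 y from rfl,
          lf_zero_right μ hμ, zero_add] at h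
        exact hy h
    · rintro ⟨x1, x2⟩ hx
      rw [hVdef, AddSubgroup.mem_prod, AddSubgroup.mem_bot] at hx
      obtain ⟨hx1, rfl⟩ := hx
      rintro ⟨y1, y2⟩ hy
      rw [hPdef, AddSubgroup.mem_prod] at hy
      show μ x1 y1 + ν 0 y2 = 0
      rw [hμ1 x1 hx1 y1 hy.1, lf_zero_left ν hν, add_zero]
  set D : AddSubgroup (A × B) := G₁ ⊓ P with hDdef
  have hperpD : perp lam hlam D = G₁ ⊔ V := by
    have hle : G₁ ⊔ V ≤ perp lam hlam D := by
      refine sup_le ?_ ?_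
      · rw [← hperpG]; exact perp_antitone lam hlam inf_le_left
      · rw [← hperpP]; exact perp_antitone lam hlam inf_le_right
    have e1 : Nat.card (perp lam hlam D) * Nat.card D = Nat.card (A × B) :=
      perp_card lam hlam D
    have e2 : Nat.card (G₁ ⊔ V : AddSubgroup (A × B)) *
        Nat.card (G₁ ⊓ V : AddSubgroup (A × B)) = Nat.card G₁ * Nat.card V :=
      card_sup_mul_card_inf _ _
    have hinf2 : (G₁ ⊓ V : AddSubgroup (A × B)) = perp lam hlam (G₁ ⊔ P) := by
      rw [perp_sup, hperpG, hperpP]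
    have e3 : Nat.card (G₁ ⊓ V : AddSubgroup (A × B)) *
        Nat.card (G₁ ⊔ P : AddSubgroup (A × B)) = Nat.card (A × B) := by
      rw [hinf2]; exact perp_card lam hlam _
    have e4 : Nat.card V * Nat.card P = Nat.card (A × B) := by
      have h := perp_card lam hlam P
      rwa [hperpP] at h
    have e5 : Nat.card (G₁ ⊔ P : AddSubgroup (A × B)) * Nat.card D =
        Nat.card G₁ * Nat.card P := card_sup_mul_card_inf _ _
    have hg2 : Nat.card G₁ * Nat.card G₁ = Nat.card (A × B) := by
      rw [← sq]; exact hcardG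
    have hN : 0 < Nat.card (A × B) := Nat.card_pos
    have hr : 0 < Nat.card D := Nat.card_pos
    have key : Nat.card (G₁ ⊔ V : AddSubgroup (A × B)) * Nat.card D * Nat.card (A × B) =
        Nat.card (A × B) * Nat.card (A × B) := by
      calc Nat.card (G₁ ⊔ V : AddSubgroup (A × B)) * Nat.card D * Nat.card (A × B)
          = Nat.card (G₁ ⊔ V : AddSubgroup (A × B)) * Nat.card D *
            (Nat.card (G₁ ⊓ V : AddSubgroup (A × B)) *
              Nat.card (G₁ ⊔ P : AddSubgroup (A × B))) := by rw [e3]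
        _ = (Nat.card (G₁ ⊔ V : AddSubgroup (A × B)) *
              Nat.card (G₁ ⊓ V : AddSubgroup (A × B))) *
            (Nat.card (G₁ ⊔ P : AddSubgroup (A × B)) * Nat.card D) := by ring
        _ = (Nat.card G₁ * Nat.card V) * (Nat.card G₁ * Nat.card P) := by rw [e2, e5]
        _ = (Nat.card G₁ * Nat.card G₁) * (Nat.card V * Nat.card P) := by ring
        _ = Nat.card (A × B) * Nat.card (A × B) := by rw [hg2, e4]
    have h6 : Nat.card (G₁ ⊔ V : AddSubgroup (A × B)) * Nat.card D = Nat.card (A × B) :=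
      Nat.eq_of_mul_eq_mul_right hN key
    have h7 : Nat.card (perp lam hlam D) = Nat.card (G₁ ⊔ V : AddSubgroup (A × B)) :=
      Nat.eq_of_mul_eq_mul_right hr (e1.trans h6.symm)
    exact (addSubgroup_eq_of_le_of_card_le hle h7.le).symm
  set B₁ : AddSubgroup B := D.map (AddMonoidHom.snd A B) with hB₁def
  have hmemB₁ : ∀ b : B, b ∈ B₁ ↔ ∃ a : A, (a, b) ∈ D := by
    intro b
    rw [hB₁def, AddSubgroup.mem_map]
    constructor
    · rintro ⟨⟨a, b'⟩, hx, rfl⟩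
      exact ⟨a, hx⟩
    · rintro ⟨a, ha⟩
      exact ⟨(a, b), ha, rfl⟩
  have hDmem : ∀ a : A, ∀ b : B, (a, b) ∈ D → (a, b) ∈ G₁ ∧ a ∈ A₁ := by
    intro a b hab
    obtain ⟨h1, h2⟩ := AddSubgroup.mem_inf.mp hab
    exact ⟨h1, (AddSubgroup.mem_prod.mp h2).1⟩
  have hvanν : ∀ x ∈ B₁, ∀ y ∈ B₁, ν x y = 0 := by
    intro b hb b' hb'
    obtain ⟨a, ha⟩ := (hmemB₁ b).mp hb
    obtain ⟨a', ha'⟩ := (hmemB₁ b').mp hb'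
    obtain ⟨haG, haA⟩ := hDmem a b ha
    obtain ⟨ha'G, ha'A⟩ := hDmem a' b' ha'
    have h0 : μ a a' + ν b b' = 0 := hL1 (a, b) haG (a', b') ha'G
    rwa [hμ1 a haA a' ha'A, zero_add] at h0
  have hvang : ∀ x ∈ B₁, g x = 0 := by
    intro b hb
    obtain ⟨a, ha⟩ := (hmemB₁ b).mp hb
    obtain ⟨haG, haA⟩ := hDmem a b ha
    have h0 : f a + g b = 0 := hF1 (a, b) haG
    rwa [hf1 a haA, zero_add] at h0
  have hperpB₁ : perp ν hν B₁ = B₁ := by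
    apply le_antisymm
    · intro b hb
      have hmem : (0, b) ∈ perp lam hlam D := by
        intro y hy
        have hy2 : y.2 ∈ B₁ := (hmemB₁ y.2).mpr ⟨y.1, by rwa [Prod.mk.eta]⟩
        show μ 0 y.1 + ν b y.2 = 0
        rw [lf_zero_left μ hμ, zero_add]
        exact hb y.2 hy2
      rw [hperpD] at hmem
      obtain ⟨u, hu, w, hw, huw⟩ := AddSubgroup.mem_sup.mp hmem
      rw [hVdef, AddSubgroup.mem_prod, AddSubgroup.mem_bot] at hw
      obtain ⟨hw1, hw2⟩ := hw
      have hu2 : u.2 = b := by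
        have h := congrArg Prod.snd huw
        simpa [hw2] using h
      have hu1 : u.1 ∈ A₁ := by
        have h1 : u.1 + w.1 = 0 := congrArg Prod.fst huw
        rw [eq_neg_of_add_eq_zero_left h1]
        exact A₁.neg_mem hw1
      refine (hmemB₁ b).mpr ⟨u.1, ?_⟩
      have heq : (u.1, b) = u := Prod.ext rfl hu2.symm
      rw [heq, hDdef]
      exact AddSubgroup.mem_inf.mpr ⟨hu, AddSubgroup.mem_prod.mpr ⟨hu1, trivial⟩⟩
    · exact fun x hx y hy => hvanν x hx y hy
  refine ⟨B₁, ?_, hvanν, hvang⟩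
  have h := perp_card ν hν B₁
  rw [hperpB₁] at h
  rw [sq]
  exact h
end

section
/- Let p be a prime, A a finite abelian group with r_p(A) ≥ 2, and f : A → ℚ a function. Suppose S_H(f) ≤ 0 for every H ∈ 𝒢_p(A), and S_H(f) = 0 for at most one H ∈ 𝒢_p(A). Then for every integer n ≥ 1 there do not exist subgroups G and H of A^n with G ∩ H = {0}, G + H = A^n, G isomorphic to H as abelian groups, and f^{(n)}(x) = 0 for every x ∈ G ∪ H. -/
open scoped BigOperators

/-- The `p`-torsion subgroup `{a ∈ A : p • a = 0}`. -/
def torsionSubgroup (n : ℕ) (A : Type*) [AddCommGroup A] : AddSubgroup A where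
  carrier := {a : A | n • a = 0}
  zero_mem' := smul_zero n
  add_mem' := by
    intro a b ha hb
    simp only [Set.mem_setOf_eq] at *
    rw [smul_add, ha, hb, add_zero]
  neg_mem' := by
    intro a ha
    simp only [Set.mem_setOf_eq] at *
    rw [smul_neg, ha, neg_zero]

/-- `rp p A` is the number of cyclic factors of `p`-power order in a decomposition of
`A` into cyclic groups of prime-power order; equivalently, the `𝔽_p`-dimension of the
`p`-torsion subgroup of `A`, i.e. the exponent of `p` in its cardinality. -/
noncomputable def rp (p : ℕ) (A : Type*) [AddCommGroup A] : ℕ :=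
  (Nat.card (torsionSubgroup p A)).factorization p

/-- `SH K f = Σ_{h ∈ K} f h`. -/
noncomputable def SH {A : Type*} [AddCommGroup A] (K : AddSubgroup A) (f : A → ℚ) : ℚ :=
  ∑ᶠ h ∈ (K : Set A), f h

set_option linter.unusedSectionVars false

section aux

variable {A : Type*} [AddCommGroup A] [Finite A]

lemma addOrderOf_eq_prime' {p : ℕ} (hp : p.Prime) {a : A} (ha : p • a = 0) (ha0 : a ≠ 0) :
    addOrderOf a = p := by
  have hdvd : addOrderOf a ∣ p := addOrderOf_dvd_of_nsmul_eq_zero ha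
  rcases (Nat.Prime.eq_one_or_self_of_dvd hp _ hdvd) with h | h
  · exact absurd (AddMonoid.addOrderOf_eq_one_iff.mp h) ha0
  · exact h

lemma SH_zmultiples_eq_sum {p : ℕ} (hp : p.Prime) {a : A} (ha : p • a = 0) (ha0 : a ≠ 0)
    (f : A → ℚ) :
    SH (AddSubgroup.zmultiples a) f = ∑ j ∈ Finset.range p, f (j • a) := by
  classical
  have hord : addOrderOf a = p := addOrderOf_eq_prime' hp ha ha0
  have hfin : IsOfFinAddOrder a := by
    rw [← addOrderOf_pos_iff, hord]; exact hp.pos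
  have hset : (AddSubgroup.zmultiples a : Set A)
      = ↑((Finset.range p).image (· • a : ℕ → A)) := by
    ext y
    rw [Finset.coe_image, Finset.coe_range]
    have := hfin.mem_zmultiples_iff_mem_range_addOrderOf (y := y)
    rw [hord] at this
    simpa [Set.mem_image] using this
  rw [SH, hset, finsum_mem_coe_finset, Finset.sum_image]
  intro j hj k hk hjk
  simp only [Finset.mem_coe, Finset.mem_range] at hj hk
  have := nsmul_eq_nsmul_iff_modEq.mp hjk
  rwa [hord, Nat.ModEq, Nat.mod_eq_of_lt hj, Nat.mod_eq_of_lt hk] at this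

lemma card_zmultiples_eq_prime {p : ℕ} (hp : p.Prime) {a : A} (ha : p • a = 0) (ha0 : a ≠ 0) :
    Nat.card (AddSubgroup.zmultiples a) = p := by
  rw [Nat.card_zmultiples, addOrderOf_eq_prime' hp ha ha0]

end aux

/-- If `r_p(A) ≥ 2`, `S_K(f) ≤ 0` for all order-`p` subgroups `K`, with equality for
at most one such `K`, then for no `n ≥ 1` does `A^n` admit a splitting `G ⊕ H` with
`G ≅ H` and `f^{(n)}` vanishing on `G ∪ H`. -/
theorem stmt11 {A : Type*} [AddCommGroup A] [Finite A]
    (p : ℕ) (hp : p.Prime) (hrp : 2 ≤ rp p A)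
    (f : A → ℚ)
    (hle : ∀ K : AddSubgroup A, Nat.card K = p → SH K f ≤ 0)
    (hone : {K : AddSubgroup A | Nat.card K = p ∧ SH K f = 0}.Subsingleton) :
    ∀ n : ℕ, 1 ≤ n →
      ¬ ∃ (G H : AddSubgroup (Fin n → A)),
          G ⊓ H = ⊥ ∧ G ⊔ H = ⊤ ∧ Nonempty (G ≃+ H) ∧
          (∀ x : Fin n → A, (x ∈ G ∨ x ∈ H) → ∑ i, f (x i) = 0) := by
  intro n hn
  rintro ⟨G, H, hbot, htop, -, hzero⟩
  classical
  set Z : Set (AddSubgroup A) := {K | Nat.card K = p ∧ SH K f = 0} with hZ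
  -- f 0 = 0
  have hf0 : f 0 = 0 := by
    have h0 : ∑ i : Fin n, f ((0 : Fin n → A) i) = 0 := hzero 0 (Or.inl (zero_mem G))
    simp only [Pi.zero_apply, Finset.sum_const, Finset.card_univ, Fintype.card_fin,
      nsmul_eq_mul] at h0
    have hne : (n : ℚ) ≠ 0 := Nat.cast_ne_zero.mpr (by omega)
    exact (mul_eq_zero.mp h0).resolve_left hne
  -- key lemma
  have key : ∀ x : Fin n → A, (x ∈ G ∨ x ∈ H) → p • x = 0 → ∀ i, x i ≠ 0 →
      AddSubgroup.zmultiples (x i) ∈ Z := by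
    intro x hx hpx i hi
    have hcoord : ∀ j : Fin n, p • x j = 0 := by
      intro j
      have := congrFun hpx j
      simpa using this
    -- the double sum is zero
    have hdsum : ∑ j : Fin n, ∑ k ∈ Finset.range p, f (k • x j) = 0 := by
      rw [Finset.sum_comm]
      apply Finset.sum_eq_zero
      intro k _
      have hm : (k • x ∈ G ∨ k • x ∈ H) := by
        rcases hx with h | h
        · exact Or.inl (AddSubgroup.nsmul_mem G h k)
        · exact Or.inr (AddSubgroup.nsmul_mem H h k)
      have := hzero (k • x) hm
      simpa [Pi.smul_apply] using this
    -- each inner sum is ≤ 0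
    have hnonpos : ∀ j : Fin n, (∑ k ∈ Finset.range p, f (k • x j)) ≤ 0 := by
      intro j
      by_cases hj : x j = 0
      · simp [hj, hf0]
      · rw [← SH_zmultiples_eq_sum hp (hcoord j) hj f]
        exact hle _ (card_zmultiples_eq_prime hp (hcoord j) hj)
    have hall := (Finset.sum_eq_zero_iff_of_nonpos (fun j _ => hnonpos j)).mp hdsum
    have hi' := hall i (Finset.mem_univ i)
    rw [← SH_zmultiples_eq_sum hp (hcoord i) hi f] at hi'
    exact ⟨card_zmultiples_eq_prime hp (hcoord i) hi, hi'⟩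
  -- index 0
  let i₀ : Fin n := ⟨0, hn⟩
  -- claim: every nonzero p-torsion element generates a member of Z
  have claim : ∀ c : A, p • c = 0 → c ≠ 0 → AddSubgroup.zmultiples c ∈ Z := by
    intro c hc hc0
    have hx : Pi.single i₀ c ∈ G ⊔ H := by rw [htop]; trivial
    obtain ⟨g, hg, h, hh, hgh⟩ := AddSubgroup.mem_sup.mp hx
    have hpg : p • g = 0 := by
      have hsum : p • g + p • h = 0 := by
        rw [← smul_add, hgh, ← Pi.single_smul, hc, Pi.single_zero]
      have hmem : p • g ∈ G ⊓ H := by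
        refine ⟨AddSubgroup.nsmul_mem G hg p, ?_⟩
        have : p • g = -(p • h) := by linear_combination (norm := abel) hsum
        rw [this]
        exact AddSubgroup.neg_mem H (AddSubgroup.nsmul_mem H hh p)
      rw [hbot] at hmem
      exact hmem
    have hph : p • h = 0 := by
      have hsum : p • g + p • h = 0 := by
        rw [← smul_add, hgh, ← Pi.single_smul, hc, Pi.single_zero]
      rw [hpg, zero_add] at hsum
      exact hsum
    have hcg : c = g i₀ + h i₀ := by
      have := congrFun hgh i₀
      simpa [Pi.single_apply] using this.symm
    have hpgc : ∀ j, p • g j = 0 := fun j => by simpa using congrFun hpg j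
    have hphc : ∀ j, p • h j = 0 := fun j => by simpa using congrFun hph j
    by_cases hg0 : g i₀ = 0
    · -- c = h i₀
      have : c = h i₀ := by rw [hcg, hg0, zero_add]
      rw [this] at hc0 ⊢
      exact key h (Or.inr hh) hph i₀ hc0
    · by_cases hh0 : h i₀ = 0
      · have : c = g i₀ := by rw [hcg, hh0, add_zero]
        rw [this] at hc0 ⊢
        exact key g (Or.inl hg) hpg i₀ hc0
      · -- both nonzero; their zmultiples are both in Z, hence equal
        have hZg := key g (Or.inl hg) hpg i₀ hg0
        have hZh := key h (Or.inr hh) hph i₀ hh0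
        have heq : AddSubgroup.zmultiples (g i₀) = AddSubgroup.zmultiples (h i₀) :=
          hone hZg hZh
        set K := AddSubgroup.zmultiples (g i₀) with hK
        have hcK : c ∈ K := by
          rw [hcg]
          exact add_mem (AddSubgroup.mem_zmultiples _)
            (heq ▸ AddSubgroup.mem_zmultiples (h i₀))
        have hle' : AddSubgroup.zmultiples c ≤ K :=
          (AddSubgroup.zmultiples_le).mpr hcK
        have : AddSubgroup.zmultiples c = K := by
          apply AddSubgroup.eq_of_le_of_card_ge hle'
          rw [card_zmultiples_eq_prime hp hc hc0, hZg.1]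
        rw [this]
        exact hZg
  -- now get two distinct order-p subgroups of the torsion subgroup
  set T := torsionSubgroup p A with hT
  have hcardT : p ^ 2 ≤ Nat.card T := by
    have hdvd : p ^ 2 ∣ Nat.card T := by
      calc p ^ 2 ∣ p ^ (Nat.card T).factorization p :=
            pow_dvd_pow p hrp
        _ ∣ Nat.card T := Nat.ordProj_dvd _ p
    have hpos : 0 < Nat.card T := Nat.card_pos
    exact Nat.le_of_dvd hpos hdvd
  have hT1 : 1 < Nat.card T := by
    have : 1 < p ^ 2 := by nlinarith [hp.two_le]
    omega
  have : Nontrivial T := Finite.one_lt_card_iff_nontrivial.mp hT1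
  obtain ⟨a, ha0⟩ := exists_ne (0 : T)
  have haA : p • (a : A) = 0 := a.2
  have haA0 : (a : A) ≠ 0 := fun h => ha0 (Subtype.ext h)
  -- find b ∈ T not in zmultiples a
  have hexb : ∃ b : T, (b : A) ∉ AddSubgroup.zmultiples (a : A) := by
    by_contra hcon
    push_neg at hcon
    have hsub : (T : Set A) ⊆ (AddSubgroup.zmultiples (a : A) : Set A) := by
      intro x hx
      exact hcon ⟨x, hx⟩
    have hmono := Nat.card_mono (Set.toFinite _) hsub
    have this : Nat.card T ≤ p := by
      rw [show Nat.card T = Nat.card (T : Set A) from rfl] at *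
      rwa [show Nat.card (AddSubgroup.zmultiples (a : A) : Set A)
          = Nat.card (AddSubgroup.zmultiples (a : A)) from rfl,
        card_zmultiples_eq_prime hp haA haA0] at hmono
    have : p ^ 2 ≤ p := le_trans hcardT this
    nlinarith [hp.two_le]
  obtain ⟨b, hb⟩ := hexb
  have hbA : p • (b : A) = 0 := b.2
  have hbA0 : (b : A) ≠ 0 := by
    intro h
    apply hb
    rw [h]
    exact zero_mem _
  have hZa := claim (a : A) haA haA0
  have hZb := claim (b : A) hbA hbA0
  have heq : AddSubgroup.zmultiples (a : A) = AddSubgroup.zmultiples (b : A) := hone hZa hZb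
  apply hb
  rw [heq]
  exact AddSubgroup.mem_zmultiples _
end

section
/- Let p be an odd prime. Define D : ℤ/pℤ → ℚ by D(i) = ((2·ī − p)² − p)/(4p), where ī ∈ {0, 1, …, p−1} is the canonical representative of i. Then for every a ∈ ℤ/pℤ, the sum Σ_{m ∈ ℤ/pℤ} (D(m·a) − D(m·(a+1))) equals (p² − 1)/6 if a = 0, equals −(p² − 1)/6 if a = −1, and equals 0 otherwise. -/
open scoped BigOperators

/-- `D i = ((2·ī − p)² − p)/(4p)` where `ī ∈ {0, …, p−1}` is the canonical
representative of `i ∈ ℤ/pℤ`. -/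
noncomputable def lensD (p : ℕ) (i : ZMod p) : ℚ :=
  ((2 * (i.val : ℚ) - p) ^ 2 - p) / (4 * p)

lemma sum_id_q (n : ℕ) : ∑ i ∈ Finset.range n, (i : ℚ) = n * (n - 1) / 2 := by
  induction n with
  | zero => simp
  | succ k ih => rw [Finset.sum_range_succ, ih]; push_cast; ring

lemma sum_sq_q (n : ℕ) :
    ∑ i ∈ Finset.range n, (i : ℚ) ^ 2 = n * (n - 1) * (2 * n - 1) / 6 := by
  induction n with
  | zero => simp
  | succ k ih => rw [Finset.sum_range_succ, ih]; push_cast; ring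

lemma sum_lensD (p : ℕ) [NeZero p] :
    ∑ m : ZMod p, lensD p m = ((p : ℚ) - 1) * ((p : ℚ) - 2) / 12 := by
  have hp0 : (p : ℚ) ≠ 0 := Nat.cast_ne_zero.mpr (NeZero.ne p)
  have hinj : Function.Injective (fun i : Fin p => ((i : ℕ) : ZMod p)) := by
    intro i j h
    have := congrArg ZMod.val h
    simpa [ZMod.val_cast_of_lt i.isLt, ZMod.val_cast_of_lt j.isLt, Fin.ext_iff] using this
  have hbij : Function.Bijective (fun i : Fin p => ((i : ℕ) : ZMod p)) :=
    (Fintype.bijective_iff_injective_and_card _).mpr ⟨hinj, by simp [ZMod.card]⟩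
  rw [← Fintype.sum_bijective _ hbij _ _ (fun i => rfl)]
  have : ∀ i : Fin p, lensD p ((i : ℕ) : ZMod p)
      = ((2 * (i : ℚ) - p) ^ 2 - p) / (4 * p) := by
    intro i; simp [lensD, ZMod.val_cast_of_lt i.isLt]
  rw [Fintype.sum_congr _ _ this, Fin.sum_univ_eq_sum_range
    (fun i => ((2 * (i : ℚ) - p) ^ 2 - p) / (4 * p))]
  have expand : ∀ i : ℕ, ((2 * (i : ℚ) - p) ^ 2 - p) / (4 * p)
      = (i : ℚ)^2 * (1/p) + (i : ℚ) * (-1) + (p^2 - p)/(4*p) := by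
    intro i; field_simp; ring
  simp_rw [expand, Finset.sum_add_distrib, ← Finset.sum_mul, sum_sq_q, sum_id_q,
    Finset.sum_const, Finset.card_range, nsmul_eq_mul]
  field_simp
  ring

lemma sum_lensD_mul (p : ℕ) (hp : p.Prime) [NeZero p] (a : ZMod p) (ha : a ≠ 0) :
    ∑ m : ZMod p, lensD p (m * a) = ∑ m : ZMod p, lensD p m := by
  haveI : Fact p.Prime := ⟨hp⟩
  exact Equiv.sum_comp (Equiv.mulRight₀ a ha) (lensD p)

/-- For an odd prime `p` and `a ∈ ℤ/pℤ`, the sum `Σ_m (D(m·a) − D(m·(a+1)))` equals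
`(p² − 1)/6` if `a = 0`, `−(p² − 1)/6` if `a = −1`, and `0` otherwise. -/
theorem stmt12 (p : ℕ) (hp : p.Prime) (hodd : Odd p) [NeZero p] :
    ∀ a : ZMod p,
      (∑ m : ZMod p, (lensD p (m * a) - lensD p (m * (a + 1)))) =
        if a = 0 then ((p : ℚ) ^ 2 - 1) / 6
        else if a = -1 then -(((p : ℚ) ^ 2 - 1) / 6)
        else 0 := by
  intro a
  have hp0 : (p : ℚ) ≠ 0 := Nat.cast_ne_zero.mpr (NeZero.ne p)
  have hD0 : lensD p (0 : ZMod p) = ((p : ℚ)^2 - p) / (4 * p) := by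
    simp [lensD]
  have hconst : ∑ _m : ZMod p, lensD p (0 : ZMod p) = (p : ℚ) * (((p:ℚ)^2 - p)/(4*p)) := by
    rw [Finset.sum_const, Finset.card_univ, ZMod.card, nsmul_eq_mul, hD0]
  rw [Finset.sum_sub_distrib]
  by_cases h0 : a = 0
  · subst h0
    simp only [if_pos rfl, ↓reduceIte, mul_zero, zero_add, mul_one]
    rw [hconst, sum_lensD]
    field_simp
    ring
  · rw [if_neg h0]
    by_cases h1 : a = -1
    · subst h1
      rw [if_pos rfl]
      simp only [neg_add_cancel, mul_zero]
      rw [hconst, sum_lensD_mul p hp _ h0, sum_lensD]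
      field_simp
      ring
    · rw [if_neg h1]
      have ha1 : a + 1 ≠ 0 := by
        intro h; apply h1; linear_combination h
      rw [sum_lensD_mul p hp _ h0, sum_lensD_mul p hp _ ha1, sub_self]
end
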